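/- Let W_9 ⊆ {0,1}^3 be the configuration W_9 = {(0,0,1),(1,0,0),(0,1,0),(1,1,0)} in Q_3. Then λ(W_9,3) ≥ 4/9. -/

import Mathlib

open Filter

namespace CubeDensity

/-- The automorphism of `Q_d` given by permuting coordinates by `σ` and then
complementing the values in the coordinates where `ε` is `true`. -/
def autMap (d : ℕ) (σ : Equiv.Perm (Fin d)) (ε : Fin d → Bool) (v : Fin d → Bool) :
    Fin d → Bool :=
  fun i => xor (v (σ⁻¹ i)) (ε i)

/-- `K` is an exact copy of `H` in `Q_d`: some automorphism of `Q_d` maps `H` onto `K`. -/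
def ExactCopy (d : ℕ) (H K : Set (Fin d → Bool)) : Prop :=
  ∃ σ : Equiv.Perm (Fin d), ∃ ε : Fin d → Bool, autMap d σ ε '' H = K

/-- The vertex of `Q_n` in the sub-`d`-cube with flip coordinates `F` (and fixed values `g`
outside `F`) corresponding to the vertex `u` of `Q_d`, identifying the flip coordinates
with `Fin d` in increasing order. -/
def embed {n d : ℕ} (F : Finset (Fin n)) (hF : F.card = d) (g : Fin n → Bool)
    (u : Fin d → Bool) : Fin n → Bool :=
  fun i => if h : i ∈ F then u ((F.orderIsoOfFin hF).symm ⟨i, h⟩) else g i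

/-- The sub-`d`-cube of `Q_n` with flip coordinates `F` and fixed values `g` outside `F`
is `H`-good for `S`: the configuration induced by `S` on it is an exact copy of `H`. -/
def IsGood {n d : ℕ} (H : Set (Fin d → Bool)) (S : Set (Fin n → Bool))
    (F : Finset (Fin n)) (hF : F.card = d) (g : Fin n → Bool) : Prop :=
  ExactCopy d H {u : Fin d → Bool | embed F hF g u ∈ S}

/-- The number of `H`-good sub-`d`-cubes of `Q_n`, where a sub-`d`-cube is encoded as a
pair `(F, g)` with `F` the `d`-element set of flip coordinates and `g` the fixed values
outside `F` (normalized to be `false` on `F`). -/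
noncomputable def goodCount (d : ℕ) (H : Set (Fin d → Bool)) (n : ℕ)
    (S : Set (Fin n → Bool)) : ℕ :=
  Nat.card {p : Finset (Fin n) × (Fin n → Bool) //
    ∃ hF : p.1.card = d, (∀ i ∈ p.1, p.2 i = false) ∧ IsGood H S p.1 hF p.2}

/-- `g(H,d,n,S)`: the fraction of the `C(n,d) * 2^(n-d)` sub-`d`-cubes of `Q_n` that are
`H`-good for `S`. -/
noncomputable def gFrac (d : ℕ) (H : Set (Fin d → Bool)) (n : ℕ)
    (S : Set (Fin n → Bool)) : ℝ :=
  (goodCount d H n S : ℝ) / ((n.choose d : ℝ) * 2 ^ (n - d))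

/-- `ex(H,d,n)`: the maximum over all `S ⊆ {0,1}^n` of the fraction of `H`-good
sub-`d`-cubes. -/
noncomputable def exD (d : ℕ) (H : Set (Fin d → Bool)) (n : ℕ) : ℝ :=
  ⨆ S : Set (Fin n → Bool), gFrac d H n S

end CubeDensity


namespace CubeDensity

def W9 : Set (Fin 3 → Bool) :=
  {![false, false, true], ![true, false, false], ![false, true, false], ![true, true, false]}

def bb : Bool → ZMod 4 := fun x => cond x 1 0

def wt (n : ℕ) (i : Fin n) : ZMod 4 := ((i.val % 3 : ℕ) : ZMod 4) + 1

def Sc (n : ℕ) : Set (Fin n → Bool) :=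
  {v | (∑ i, wt n i * bb (v i)) = 0 ∨ (∑ i, wt n i * bb (v i)) = 1}

theorem core : ∀ c : Fin 3 → ZMod 4, ∀ A : ZMod 4,
    (∃ k, c k = 2 ∧ ∀ j, j ≠ k → c j = 1 ∨ c j = 3) →
    ∃ σ : Equiv.Perm (Fin 3), ∃ ε : Fin 3 → Bool, ∀ v : Fin 3 → Bool,
      ((A + ∑ k, c k * bb (v k) = 0 ∨ A + ∑ k, c k * bb (v k) = 1) ↔
        (v = autMap 3 σ ε ![false, false, true] ∨ v = autMap 3 σ ε ![true, false, false] ∨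
         v = autMap 3 σ ε ![false, true, false] ∨ v = autMap 3 σ ε ![true, true, false])) := by
  decide

theorem exactCopy_of (P : (Fin 3 → Bool) → Prop) (σ : Equiv.Perm (Fin 3)) (ε : Fin 3 → Bool)
    (h : ∀ v, P v ↔
      (v = autMap 3 σ ε ![false, false, true] ∨ v = autMap 3 σ ε ![true, false, false] ∨
       v = autMap 3 σ ε ![false, true, false] ∨ v = autMap 3 σ ε ![true, true, false])) :
    ExactCopy 3 W9 {v | P v} := by
  refine ⟨σ, ε, ?_⟩
  ext v
  rw [Set.mem_setOf_eq, h v]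
  simp only [W9, Set.mem_image, Set.mem_insert_iff, Set.mem_singleton_iff]
  constructor
  · rintro ⟨u, (rfl | rfl | rfl | rfl), rfl⟩ <;> tauto
  · rintro (rfl | rfl | rfl | rfl) <;> [exact ⟨_, by tauto, rfl⟩; exact ⟨_, by tauto, rfl⟩;
      exact ⟨_, by tauto, rfl⟩; exact ⟨_, by tauto, rfl⟩]

theorem sum_embed {n : ℕ} (F : Finset (Fin n)) (hF : F.card = 3) (g : Fin n → Bool)
    (u : Fin 3 → Bool) :
    ∑ i, wt n i * bb (embed F hF g u i)
      = (∑ i ∈ Fᶜ, wt n i * bb (g i)) + ∑ k : Fin 3, wt n (F.orderEmbOfFin hF k) * bb (u k) := by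
  rw [← Finset.sum_add_sum_compl F, add_comm]
  congr 1
  · apply Finset.sum_congr rfl
    intro i hi
    rw [Finset.mem_compl] at hi
    simp [embed, hi]
  · rw [← Finset.sum_coe_sort F]
    refine (Fintype.sum_equiv (F.orderIsoOfFin hF).toEquiv _ _ ?_).symm
    intro k
    have hco : (((F.orderIsoOfFin hF).toEquiv k : F) : Fin n) = F.orderEmbOfFin hF k := rfl
    rw [hco]
    congr 1
    have hmem : F.orderEmbOfFin hF k ∈ F := Finset.orderEmbOfFin_mem F hF k
    simp only [embed, dif_pos hmem]
    congr 1
    have h2 : (⟨F.orderEmbOfFin hF k, hmem⟩ : F) = (F.orderIsoOfFin hF).toEquiv k :=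
      Subtype.ext hco.symm
    rw [h2]
    exact congrArg u ((F.orderIsoOfFin hF).symm_apply_apply k).symm

theorem isGood_Sc {n : ℕ} (F : Finset (Fin n)) (hF : F.card = 3) (g : Fin n → Bool)
    (h1 : (F.filter (fun i => i.val % 3 = 1)).card = 1) :
    IsGood W9 (Sc n) F hF g := by
  set e := F.orderEmbOfFin hF with he
  set c : Fin 3 → ZMod 4 := fun k => wt n (e k) with hc
  set A : ZMod 4 := ∑ i ∈ Fᶜ, wt n i * bb (g i) with hA
  obtain ⟨x, hx⟩ := Finset.card_eq_one.mp h1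
  have hxF : x ∈ F ∧ x.val % 3 = 1 := by
    have : x ∈ F.filter (fun i => i.val % 3 = 1) := hx ▸ Finset.mem_singleton_self x
    simpa using this
  have hcond : ∃ k, c k = 2 ∧ ∀ j, j ≠ k → c j = 1 ∨ c j = 3 := by
    refine ⟨(F.orderIsoOfFin hF).symm ⟨x, hxF.1⟩, ?_, ?_⟩
    · have : e ((F.orderIsoOfFin hF).symm ⟨x, hxF.1⟩) = x := by
        have := (F.orderIsoOfFin hF).apply_symm_apply ⟨x, hxF.1⟩
        exact congrArg Subtype.val this
      simp only [hc, this, wt, hxF.2]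
      decide
    · intro j hj
      have hejF : e j ∈ F := Finset.orderEmbOfFin_mem F hF j
      have hejx : e j ≠ x := by
        intro hcon
        apply hj
        have : e j = e ((F.orderIsoOfFin hF).symm ⟨x, hxF.1⟩) := by
          rw [hcon]
          have := (F.orderIsoOfFin hF).apply_symm_apply ⟨x, hxF.1⟩
          exact (congrArg Subtype.val this).symm
        exact (F.orderEmbOfFin hF).injective this
      have hnot : ¬ ((e j).val % 3 = 1) := by
        intro hmod
        have : e j ∈ F.filter (fun i => i.val % 3 = 1) := Finset.mem_filter.mpr ⟨hejF, hmod⟩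
        rw [hx, Finset.mem_singleton] at this
        exact hejx this
      have hlt : (e j).val % 3 < 3 := Nat.mod_lt _ (by norm_num)
      have : (e j).val % 3 = 0 ∨ (e j).val % 3 = 2 := by omega
      rcases this with h0 | h2
      · left; simp only [hc, wt, h0]; decide
      · right; simp only [hc, wt, h2]; decide
  obtain ⟨σ, ε, hiff⟩ := core c A hcond
  have hset : {u : Fin 3 → Bool | embed F hF g u ∈ Sc n}
      = {u | A + ∑ k, c k * bb (u k) = 0 ∨ A + ∑ k, c k * bb (u k) = 1} := by
    ext u
    simp only [Set.mem_setOf_eq, Sc, sum_embed F hF g u, hA, hc, he]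
  unfold IsGood
  rw [hset]
  exact exactCopy_of _ σ ε hiff

end CubeDensity

namespace CubeDensity

/-- Count of normalized pairs `(F,g)` with `Q F`, where all `Q`-sets have card `d`. -/
theorem card_pairs {n d : ℕ} (Q : Finset (Fin n) → Prop) [DecidablePred Q]
    (hcard : ∀ F, Q F → F.card = d) :
    (Finset.univ.filter fun p : Finset (Fin n) × (Fin n → Bool) =>
        Q p.1 ∧ ∀ i ∈ p.1, p.2 i = false).card
      = (Finset.univ.filter Q).card * 2 ^ (n - d) := by
  rw [Finset.card_eq_sum_card_fiberwise (f := Prod.fst) (t := Finset.univ.filter Q)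
    (fun p hp => by simp at hp ⊢; exact hp.1)]
  rw [Finset.sum_congr rfl (g := fun _ => 2 ^ (n - d)), Finset.sum_const, smul_eq_mul]
  intro F hF
  rw [Finset.mem_filter] at hF
  have hQ := hF.2
  -- fiber over F ≃ functions vanishing on F
  have hbij : (Finset.filter (fun p : Finset (Fin n) × (Fin n → Bool) =>
      (Q p.1 ∧ ∀ i ∈ p.1, p.2 i = false) ∧ p.1 = F) Finset.univ).card
      = (Finset.univ.filter fun g : Fin n → Bool => ∀ i ∈ F, g i = false).card := by
    apply Finset.card_nbij (i := Prod.snd)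
    · intro p hp
      simp only [Finset.coe_filter, Set.mem_setOf_eq, Finset.mem_coe, Finset.mem_filter, Finset.mem_univ, true_and] at hp ⊢
      rcases hp with ⟨⟨_, h2⟩, rfl⟩
      exact h2
    · intro p hp q hq hpq
      simp only [Finset.coe_filter, Finset.mem_univ, true_and, Set.mem_setOf_eq] at hp hq
      exact Prod.ext (hp.2.trans hq.2.symm) hpq
    · intro g hg
      simp only [Finset.coe_filter, Set.mem_setOf_eq, Finset.mem_univ, true_and] at hg ⊢
      exact ⟨(F, g), ⟨⟨hQ, hg⟩, rfl⟩, rfl⟩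
  rw [Finset.filter_filter, hbij]
  -- functions vanishing on F: 2^(n - d)
  have hEquiv : {g : Fin n → Bool // ∀ i ∈ F, g i = false} ≃ (↥(Fᶜ : Finset (Fin n)) → Bool) :=
    { toFun := fun g i => g.1 i
      invFun := fun h => ⟨fun i => if hi : i ∈ (Fᶜ : Finset (Fin n)) then h ⟨i, hi⟩ else false,
        fun i hi => by simp [Finset.mem_compl, hi]⟩
      left_inv := fun g => by
        ext i
        by_cases hi : i ∈ F
        · simp [Finset.mem_compl, hi, g.2 i hi]
        · simp [Finset.mem_compl, hi]
      right_inv := fun h => by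
        ext i
        simp [i.2] }
  have := Fintype.card_congr hEquiv
  rw [Fintype.card_subtype] at this
  rw [this, Fintype.card_fun, Fintype.card_coe, Fintype.card_bool, Finset.card_compl,
    Fintype.card_fin, hcard F hQ]

theorem goodCount_le {n d : ℕ} (H : Set (Fin d → Bool)) (S : Set (Fin n → Bool)) :
    goodCount d H n S ≤ n.choose d * 2 ^ (n - d) := by
  classical
  have key := card_pairs (n := n) (fun F => F.card = d) (fun _ h => h)
  have : goodCount d H n S ≤ (Finset.univ.filter fun p : Finset (Fin n) × (Fin n → Bool) =>
      p.1.card = d ∧ ∀ i ∈ p.1, p.2 i = false).card := by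
    rw [← Nat.card_eq_finsetCard]
    apply Nat.card_le_card_of_injective
      (f := fun p : {p : Finset (Fin n) × (Fin n → Bool) //
        ∃ hF : p.1.card = d, (∀ i ∈ p.1, p.2 i = false) ∧ IsGood H S p.1 hF p.2} =>
        (⟨p.1, by obtain ⟨hF, hn, _⟩ := p.2
                  exact Finset.mem_filter.mpr ⟨Finset.mem_univ _, hF, hn⟩⟩ : _))
    intro p q hpq
    exact Subtype.ext (congrArg Subtype.val hpq : _)
  rw [key] at this
  refine this.trans ?_
  have h2 : (Finset.univ.filter fun F : Finset (Fin n) => F.card = d).card = n.choose d := by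
    rw [← Finset.powerset_univ, ← Finset.powersetCard_eq_filter, Finset.card_powersetCard,
      Finset.card_univ, Fintype.card_fin]
  rw [h2]

end CubeDensity

namespace CubeDensity

theorem goodCount_ge (n : ℕ) :
    (Finset.univ.filter fun F : Finset (Fin n) =>
        F.card = 3 ∧ (F.filter fun i => i.val % 3 = 1).card = 1).card * 2 ^ (n - 3)
      ≤ goodCount 3 W9 n (Sc n) := by
  classical
  rw [← card_pairs (fun F : Finset (Fin n) =>
      F.card = 3 ∧ (F.filter fun i => i.val % 3 = 1).card = 1) (fun _ h => h.1)]
  rw [← Nat.card_eq_finsetCard]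
  apply Nat.card_le_card_of_injective
    (f := fun p : {p : Finset (Fin n) × (Fin n → Bool) //
        p ∈ Finset.univ.filter fun p : Finset (Fin n) × (Fin n → Bool) =>
          ((p.1.card = 3 ∧ (p.1.filter fun i => i.val % 3 = 1).card = 1) ∧
            ∀ i ∈ p.1, p.2 i = false)} =>
      (⟨p.1, by
        have hp := Finset.mem_filter.mp p.2
        exact ⟨hp.2.1.1, hp.2.2, isGood_Sc p.1.1 hp.2.1.1 p.1.2 hp.2.1.2⟩⟩ :
        {p : Finset (Fin n) × (Fin n → Bool) //
          ∃ hF : p.1.card = 3, (∀ i ∈ p.1, p.2 i = false) ∧ IsGood W9 (Sc n) p.1 hF p.2}))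
  intro p q hpq
  exact Subtype.ext (congrArg Subtype.val hpq : _)

theorem range_filter_card (m : ℕ) :
    ((Finset.range (3 * m)).filter fun x => x % 3 = 1).card = m := by
  induction m with
  | zero => simp
  | succ m ih =>
    have h3 : 3 * (m + 1) = (3 * m + 1) + 1 + 1 := by ring
    have h1 : ¬((3 * m + 1 + 1) % 3 = 1) := by omega
    have h2 : (3 * m + 1) % 3 = 1 := by omega
    have h0 : ¬((3 * m) % 3 = 1) := by omega
    rw [h3, Finset.range_add_one, Finset.filter_insert, if_neg h1,
      Finset.range_add_one, Finset.filter_insert, if_pos h2,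
      Finset.range_add_one, Finset.filter_insert, if_neg h0,
      Finset.card_insert_of_notMem (by simp), ih]

theorem card_B (m : ℕ) :
    (Finset.univ.filter fun i : Fin (3 * m) => i.val % 3 = 1).card = m := by
  have heq : (Finset.univ.filter fun i : Fin (3 * m) => i.val % 3 = 1).card
      = ((Finset.range (3 * m)).filter fun x => x % 3 = 1).card := by
    apply Finset.card_nbij (i := Fin.val)
    · intro i hi
      simp only [Finset.coe_filter, Set.mem_setOf_eq, Finset.mem_coe, Finset.mem_filter, Finset.mem_univ, true_and] at hi
      simp [Finset.mem_range, i.isLt, hi]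
    · intro i _ j _ h
      exact Fin.ext h
    · intro x hx
      simp only [Finset.coe_filter, Finset.mem_range, Set.mem_setOf_eq] at hx ⊢
      exact ⟨⟨x, hx.1⟩, by simpa using hx.2, rfl⟩
  rw [heq, range_filter_card]

theorem card_goodF (m : ℕ) :
    m * ((2 * m).choose 2)
      ≤ (Finset.univ.filter fun F : Finset (Fin (3 * m)) =>
          F.card = 3 ∧ (F.filter fun i => i.val % 3 = 1).card = 1).card := by
  classical
  set B := Finset.univ.filter fun i : Fin (3 * m) => i.val % 3 = 1 with hB
  have hBcard : B.card = m := card_B m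
  have hBc : (Bᶜ : Finset (Fin (3 * m))).card = 2 * m := by
    rw [Finset.card_compl, Fintype.card_fin, hBcard]; omega
  have hsrc : (B ×ˢ (Bᶜ : Finset (Fin (3 * m))).powersetCard 2).card
      = m * ((2 * m).choose 2) := by
    rw [Finset.card_product, hBcard, Finset.card_powersetCard, hBc]
  rw [← hsrc, ← Nat.card_eq_finsetCard, ← Nat.card_eq_finsetCard]
  have key : ∀ q : Fin (3 * m) × Finset (Fin (3 * m)),
      q ∈ B ×ˢ (Bᶜ : Finset (Fin (3 * m))).powersetCard 2 →
      (insert q.1 q.2).card = 3 ∧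
        ((insert q.1 q.2).filter fun i => i.val % 3 = 1) = {q.1} ∧ q.1 ∉ q.2 := by
    rintro ⟨x, P⟩ hq
    rw [Finset.mem_product] at hq
    obtain ⟨hx, hP⟩ := hq
    rw [Finset.mem_powersetCard] at hP
    rw [hB, Finset.mem_filter] at hx
    have hxP : x ∉ P := by
      intro hmem
      have := hP.1 hmem
      rw [Finset.mem_compl, hB, Finset.mem_filter] at this
      exact this ⟨Finset.mem_univ _, hx.2⟩
    refine ⟨by rw [Finset.card_insert_of_notMem hxP, hP.2], ?_, hxP⟩
    rw [Finset.filter_insert, if_pos hx.2]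
    have : P.filter (fun i => i.val % 3 = 1) = ∅ := by
      rw [Finset.filter_eq_empty_iff]
      intro i hi hmod
      have := hP.1 hi
      rw [Finset.mem_compl, hB, Finset.mem_filter] at this
      exact this ⟨Finset.mem_univ _, hmod⟩
    rw [this]
    simp
  apply Nat.card_le_card_of_injective
    (f := fun q : ↥(B ×ˢ (Bᶜ : Finset (Fin (3 * m))).powersetCard 2) =>
      (⟨insert q.1.1 q.1.2, by
        obtain ⟨h1, h2, _⟩ := key q.1 q.2
        exact Finset.mem_filter.mpr ⟨Finset.mem_univ _, h1, by rw [h2]; simp⟩⟩ :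
        ↥(Finset.univ.filter fun F : Finset (Fin (3 * m)) =>
          F.card = 3 ∧ (F.filter fun i => i.val % 3 = 1).card = 1)))
  rintro ⟨⟨x, P⟩, hq⟩ ⟨⟨x', P'⟩, hq'⟩ h
  have hF : insert x P = insert x' P' := congrArg Subtype.val h
  obtain ⟨_, hfx, hxP⟩ := key _ hq
  obtain ⟨_, hfx', hxP'⟩ := key _ hq'
  have hxx : x = x' := by
    have : ({x} : Finset (Fin (3 * m))) = {x'} := by rw [← hfx, ← hfx', hF]
    simpa using this
  subst hxx
  have hxP2 : x ∉ P := hxP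
  have hxP2' : x ∉ P' := hxP'
  have hPP : P = P' := by
    rw [← Finset.erase_insert hxP2, hF, Finset.erase_insert hxP2']
  exact Subtype.ext (Prod.ext rfl hPP)

theorem choose_ineq (m : ℕ) (hm : 1 ≤ m) :
    4 * (3 * m).choose 3 ≤ 9 * (m * ((2 * m).choose 2)) := by
  obtain ⟨a, rfl⟩ : ∃ a, m = 1 + a := ⟨m - 1, by omega⟩
  have h3 : (3 * (1 + a)).descFactorial 3 = 6 * (3 * (1 + a)).choose 3 := by
    rw [Nat.descFactorial_eq_factorial_mul_choose]; norm_num [Nat.factorial]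
  have h2 : (2 * (1 + a)).descFactorial 2 = 2 * (2 * (1 + a)).choose 2 := by
    rw [Nat.descFactorial_eq_factorial_mul_choose]; norm_num [Nat.factorial]
  have e1 : 3 * (1 + a) - 2 = 3 * a + 1 := by omega
  have e2 : 3 * (1 + a) - 1 = 3 * a + 2 := by omega
  have e0 : 3 * (1 + a) = 3 * a + 3 := by omega
  have f1 : 2 * (1 + a) - 1 = 2 * a + 1 := by omega
  have f0 : 2 * (1 + a) = 2 * a + 2 := by omega
  have hd3 : (3 * (1 + a)).descFactorial 3 = (3 * a + 1) * ((3 * a + 2) * (3 * a + 3)) := by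
    simp only [Nat.descFactorial_succ, Nat.descFactorial_zero, e1, e2, e0, mul_one]
    rw [show 3*a+3-2 = 3*a+1 from by omega, show 3*a+3-1 = 3*a+2 from by omega,
      show 3*a+3-0 = 3*a+3 from by omega]
  have hd2 : (2 * (1 + a)).descFactorial 2 = (2 * a + 1) * (2 * a + 2) := by
    simp only [Nat.descFactorial_succ, Nat.descFactorial_zero, f1, f0, mul_one]
    rw [show 2*a+2-1 = 2*a+1 from by omega, show 2*a+2-0 = 2*a+2 from by omega]
  have g3 : 6 * (3 * (1 + a)).choose 3 = (3 * a + 1) * ((3 * a + 2) * (3 * a + 3)) :=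
    h3.symm.trans hd3
  have g2 : 2 * (2 * (1 + a)).choose 2 = (2 * a + 1) * (2 * a + 2) := h2.symm.trans hd2
  have g2' : (1 + a) * (2 * (2 * (1 + a)).choose 2) = (1 + a) * ((2 * a + 1) * (2 * a + 2)) := by
    rw [g2]
  nlinarith [g3, g2', a.zero_le]

end CubeDensity

namespace CubeDensity

def slice {n : ℕ} (i : Fin (n + 1)) (b : Bool) (S : Set (Fin (n + 1) → Bool)) :
    Set (Fin n → Bool) := {v | i.insertNth b v ∈ S}

theorem orderEmb_map {n d : ℕ} (i : Fin (n + 1)) (F : Finset (Fin n)) (hF : F.card = d)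
    (hF' : (F.map i.succAboveEmb).card = d) (k : Fin d) :
    (F.map i.succAboveEmb).orderEmbOfFin hF' k = i.succAbove (F.orderEmbOfFin hF k) := by
  have := Finset.orderEmbOfFin_unique (f := fun k => i.succAbove (F.orderEmbOfFin hF k)) hF'
    (fun x => by
      rw [Finset.mem_map]
      exact ⟨F.orderEmbOfFin hF x, Finset.orderEmbOfFin_mem F hF x, rfl⟩)
    (fun a b hab => Fin.succAbove_lt_succAbove_iff.mpr ((F.orderEmbOfFin hF).strictMono hab))
  exact (congrFun this k).symm

theorem embed_insertNth {n d : ℕ} (i : Fin (n + 1)) (b : Bool) (F : Finset (Fin n))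
    (hF : F.card = d) (hF' : (F.map i.succAboveEmb).card = d)
    (g : Fin n → Bool) (u : Fin d → Bool) :
    embed (F.map i.succAboveEmb) hF' (i.insertNth b g) u
      = i.insertNth b (embed F hF g u) := by
  funext j
  by_cases hj : j = i
  · subst hj
    have hni : j ∉ F.map j.succAboveEmb := by
      rw [Finset.mem_map]
      rintro ⟨k, _, hk⟩
      exact j.succAbove_ne k hk
    rw [embed, dif_neg hni, Fin.insertNth_apply_same, Fin.insertNth_apply_same]
  · obtain ⟨k, rfl⟩ := Fin.exists_succAbove_eq hj
    rw [Fin.insertNth_apply_succAbove]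
    by_cases hk : k ∈ F
    · have hjm : i.succAbove k ∈ F.map i.succAboveEmb := by
        rw [Finset.mem_map]; exact ⟨k, hk, rfl⟩
      rw [embed, dif_pos hjm, embed, dif_pos hk]
      congr 1
      set a := (F.orderIsoOfFin hF).symm ⟨k, hk⟩ with ha
      have hoa : F.orderEmbOfFin hF a = k := by
        have := (F.orderIsoOfFin hF).apply_symm_apply ⟨k, hk⟩
        exact congrArg Subtype.val this
      have : ((F.map i.succAboveEmb).orderIsoOfFin hF') a
          = ⟨i.succAbove k, hjm⟩ := by
        apply Subtype.ext
        show (F.map i.succAboveEmb).orderEmbOfFin hF' a = _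
        rw [orderEmb_map i F hF hF' a, hoa]
      rw [← this]
      exact ((F.map i.succAboveEmb).orderIsoOfFin hF').symm_apply_apply a
    · have hjm : i.succAbove k ∉ F.map i.succAboveEmb := by
        rw [Finset.mem_map]
        rintro ⟨k', hk', hkk⟩
        exact hk ((Fin.succAbove_right_injective (p := i)) hkk ▸ hk')
      rw [embed, dif_neg hjm, embed, dif_neg hk, Fin.insertNth_apply_succAbove]

end CubeDensity

namespace CubeDensity

theorem isGood_slice_iff {n d : ℕ} (H : Set (Fin d → Bool)) (S : Set (Fin (n + 1) → Bool))
    (i : Fin (n + 1)) (b : Bool) (F : Finset (Fin n)) (hF : F.card = d)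
    (hF' : (F.map i.succAboveEmb).card = d) (g : Fin n → Bool) :
    IsGood H (slice i b S) F hF g ↔ IsGood H S (F.map i.succAboveEmb) hF' (i.insertNth b g) := by
  unfold IsGood
  have hset : {u : Fin d → Bool | embed (F.map i.succAboveEmb) hF' (i.insertNth b g) u ∈ S}
      = {u | embed F hF g u ∈ slice i b S} := by
    ext u
    rw [Set.mem_setOf_eq, Set.mem_setOf_eq, embed_insertNth i b F hF hF' g u]
    rfl
  rw [hset]

theorem isGood_congr {n d : ℕ} (H : Set (Fin d → Bool)) (S : Set (Fin n → Bool))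
    {F F' : Finset (Fin n)} (hFF : F = F') {g g' : Fin n → Bool} (hgg : g = g')
    {hF : F.card = d} {hF' : F'.card = d} (h : IsGood H S F hF g) : IsGood H S F' hF' g' := by
  subst hFF; subst hgg; exact h

/-- The good-normalized predicate on pairs. -/
def GN (d : ℕ) (H : Set (Fin d → Bool)) {n : ℕ} (S : Set (Fin n → Bool))
    (p : Finset (Fin n) × (Fin n → Bool)) : Prop :=
  ∃ hF : p.1.card = d, (∀ i ∈ p.1, p.2 i = false) ∧ IsGood H S p.1 hF p.2

theorem goodCount_eq (d : ℕ) (H : Set (Fin d → Bool)) {n : ℕ} (S : Set (Fin n → Bool)) :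
    goodCount d H n S = Nat.card {p // GN d H S p} := rfl

theorem mapPre {n : ℕ} (i : Fin (n + 1)) (F : Finset (Fin (n + 1))) (hi : i ∉ F) :
    (F.preimage i.succAbove (Fin.succAbove_right_injective.injOn)).map i.succAboveEmb = F := by
  ext j
  rw [Finset.mem_map]
  constructor
  · rintro ⟨k, hk, rfl⟩
    exact (Finset.mem_preimage.mp hk)
  · intro hj
    have hji : j ≠ i := by rintro rfl; exact hi hj
    obtain ⟨k, rfl⟩ := Fin.exists_succAbove_eq hji
    exact ⟨k, Finset.mem_preimage.mpr hj, rfl⟩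

theorem preMap {n : ℕ} (i : Fin (n + 1)) (F : Finset (Fin n)) :
    (F.map i.succAboveEmb).preimage i.succAbove (Fin.succAbove_right_injective.injOn) = F := by
  ext k
  rw [Finset.mem_preimage, Finset.mem_map]
  constructor
  · rintro ⟨k', hk', hkk⟩
    exact (Fin.succAbove_right_injective (p := i) hkk) ▸ hk'
  · intro hk
    exact ⟨k, hk, rfl⟩

theorem insertNth_comp {n : ℕ} (i : Fin (n + 1)) (g : Fin (n + 1) → Bool) :
    i.insertNth (g i) (fun k => g (i.succAbove k)) = g := by
  funext j
  by_cases hj : j = i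
  · subst hj; rw [Fin.insertNth_apply_same]
  · obtain ⟨k, rfl⟩ := Fin.exists_succAbove_eq hj
    rw [Fin.insertNth_apply_succAbove]

def fwdVal {n : ℕ} (t : (Fin (n + 1) × Bool) × (Finset (Fin n) × (Fin n → Bool))) :
    (Finset (Fin (n + 1)) × (Fin (n + 1) → Bool)) × Fin (n + 1) :=
  ((t.2.1.map t.1.1.succAboveEmb, t.1.1.insertNth t.1.2 t.2.2), t.1.1)

noncomputable def bwdVal {n : ℕ} (t : (Finset (Fin (n + 1)) × (Fin (n + 1) → Bool)) × Fin (n + 1)) :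
    (Fin (n + 1) × Bool) × (Finset (Fin n) × (Fin n → Bool)) :=
  ((t.2, t.1.2 t.2), (t.1.1.preimage t.2.succAbove (Fin.succAbove_right_injective.injOn),
    fun k => t.1.2 (t.2.succAbove k)))

theorem fwdProp {n d : ℕ} (H : Set (Fin d → Bool)) (S : Set (Fin (n + 1) → Bool))
    (t : (Fin (n + 1) × Bool) × (Finset (Fin n) × (Fin n → Bool)))
    (h : GN d H (slice t.1.1 t.1.2 S) t.2) :
    GN d H S (fwdVal t).1 ∧ (fwdVal t).2 ∉ (fwdVal t).1.1 := by
  obtain ⟨⟨i, b⟩, ⟨F, g⟩⟩ := t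
  obtain ⟨hF, hnorm, hgood⟩ := h
  simp only [fwdVal]
  refine ⟨⟨?_, ?_, ?_⟩, ?_⟩
  · show (F.map i.succAboveEmb).card = d
    rw [Finset.card_map]; exact hF
  · intro j hj
    rw [Finset.mem_map] at hj
    obtain ⟨k, hk, rfl⟩ := hj
    have hx := hnorm k hk
    show (i.insertNth b g : Fin (n + 1) → Bool) (i.succAboveEmb k) = false
    simpa using hx
  · exact (isGood_slice_iff H S i b F hF (by rw [Finset.card_map]; exact hF) g).mp hgood
  · show i ∉ F.map i.succAboveEmb
    rw [Finset.mem_map]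
    rintro ⟨k, _, hk⟩
    exact i.succAbove_ne k hk

theorem bwdProp {n d : ℕ} (H : Set (Fin d → Bool)) (S : Set (Fin (n + 1) → Bool))
    (t : (Finset (Fin (n + 1)) × (Fin (n + 1) → Bool)) × Fin (n + 1))
    (h : GN d H S t.1 ∧ t.2 ∉ t.1.1) :
    GN d H (slice (bwdVal t).1.1 (bwdVal t).1.2 S) (bwdVal t).2 := by
  obtain ⟨⟨F, g⟩, i⟩ := t
  obtain ⟨⟨hF, hnorm, hgood⟩, hi⟩ := h
  simp only [bwdVal]
  have hcard : (F.preimage i.succAbove (Fin.succAbove_right_injective.injOn)).card = d := by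
    rw [← Finset.card_map (f := i.succAboveEmb), mapPre i F hi]
    exact hF
  refine ⟨hcard, ?_, ?_⟩
  · intro k hk
    change k ∈ F.preimage i.succAbove (Fin.succAbove_right_injective.injOn) at hk
    rw [Finset.mem_preimage] at hk
    exact hnorm _ hk
  · refine (isGood_slice_iff H S i (g i) _ hcard (by rw [mapPre i F hi]; exact hF) _).mpr ?_
    exact isGood_congr H S (mapPre i F hi).symm (insertNth_comp i g).symm hgood

theorem bwdVal_fwdVal {n : ℕ} (t : (Fin (n + 1) × Bool) × (Finset (Fin n) × (Fin n → Bool))) :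
    bwdVal (fwdVal t) = t := by
  obtain ⟨⟨i, b⟩, ⟨F, g⟩⟩ := t
  simp only [fwdVal, bwdVal]
  rw [Fin.insertNth_apply_same, preMap i F]
  have hg : (fun k => (i.insertNth b g : Fin (n + 1) → Bool) (i.succAbove k)) = g := by
    funext k
    exact Fin.insertNth_apply_succAbove (α := fun _ => Bool) i b g k
  rw [hg]

theorem fwdVal_bwdVal {n : ℕ} (t : (Finset (Fin (n + 1)) × (Fin (n + 1) → Bool)) × Fin (n + 1))
    (hi : t.2 ∉ t.1.1) : fwdVal (bwdVal t) = t := by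
  obtain ⟨⟨F, g⟩, i⟩ := t
  simp only [fwdVal, bwdVal]
  rw [mapPre i F hi, insertNth_comp i g]

/-- The double-counting bijection. -/
noncomputable def dcEquiv {n d : ℕ} (H : Set (Fin d → Bool)) (S : Set (Fin (n + 1) → Bool)) :
    {t : (Fin (n + 1) × Bool) × (Finset (Fin n) × (Fin n → Bool)) //
      GN d H (slice t.1.1 t.1.2 S) t.2} ≃
    {t : (Finset (Fin (n + 1)) × (Fin (n + 1) → Bool)) × Fin (n + 1) //
      GN d H S t.1 ∧ t.2 ∉ t.1.1} where
  toFun t := ⟨fwdVal t.1, fwdProp H S t.1 t.2⟩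
  invFun t := ⟨bwdVal t.1, bwdProp H S t.1 t.2⟩
  left_inv t := Subtype.ext (bwdVal_fwdVal t.1)
  right_inv t := Subtype.ext (fwdVal_bwdVal t.1 t.2.2)

end CubeDensity

namespace CubeDensity

theorem slice_sum {n d : ℕ} (H : Set (Fin d → Bool)) (S : Set (Fin (n + 1) → Bool)) :
    ∑ ib : Fin (n + 1) × Bool, goodCount d H n (slice ib.1 ib.2 S)
      = (n + 1 - d) * goodCount d H (n + 1) S := by
  classical
  have hA : ∑ ib : Fin (n + 1) × Bool, goodCount d H n (slice ib.1 ib.2 S)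
      = Nat.card {t : (Fin (n + 1) × Bool) × (Finset (Fin n) × (Fin n → Bool)) //
          GN d H (slice t.1.1 t.1.2 S) t.2} := by
    rw [Nat.card_eq_fintype_card,
      Fintype.card_congr (Equiv.subtypeProdEquivSigmaSubtype
        (fun ib : Fin (n + 1) × Bool => fun p => GN d H (slice ib.1 ib.2 S) p)),
      Fintype.card_sigma]
    exact Finset.sum_congr rfl fun ib _ => by
      rw [goodCount_eq, Nat.card_eq_fintype_card]
  have hB : Nat.card {t : (Finset (Fin (n + 1)) × (Fin (n + 1) → Bool)) × Fin (n + 1) //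
        GN d H S t.1 ∧ t.2 ∉ t.1.1} = (n + 1 - d) * goodCount d H (n + 1) S := by
    rw [Nat.card_eq_fintype_card,
      Fintype.card_congr (Equiv.subtypeProdEquivSigmaSubtype
        (fun p : Finset (Fin (n + 1)) × (Fin (n + 1) → Bool) =>
          fun i : Fin (n + 1) => GN d H S p ∧ i ∉ p.1)),
      Fintype.card_sigma]
    have hcard : ∀ p : Finset (Fin (n + 1)) × (Fin (n + 1) → Bool),
        Fintype.card {i : Fin (n + 1) // GN d H S p ∧ i ∉ p.1}
          = if GN d H S p then n + 1 - d else 0 := by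
      intro p
      by_cases h : GN d H S p
      · rw [if_pos h,
          Fintype.card_congr (Equiv.subtypeEquivRight (fun i => and_iff_right h)),
          Fintype.card_subtype_compl, Fintype.card_fin]
        obtain ⟨hF, -, -⟩ := h
        rw [Fintype.card_of_subtype p.1 (fun x => Iff.rfl), hF]
      · rw [if_neg h, Fintype.card_eq_zero_iff]
        exact ⟨fun t => h t.2.1⟩
    rw [Finset.sum_congr rfl (fun p _ => hcard p), Finset.sum_ite, Finset.sum_const,
      Finset.sum_const_zero, add_zero, smul_eq_mul, mul_comm]
    congr 1
    rw [goodCount_eq, Nat.card_eq_fintype_card, Fintype.card_subtype]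
  rw [hA, Nat.card_congr (dcEquiv H S), hB]

theorem gFrac_nonneg {n d : ℕ} (H : Set (Fin d → Bool)) (S : Set (Fin n → Bool)) :
    0 ≤ gFrac d H n S := by
  rw [gFrac]
  positivity

theorem gFrac_le_one {n d : ℕ} (hd : d ≤ n) (H : Set (Fin d → Bool)) (S : Set (Fin n → Bool)) :
    gFrac d H n S ≤ 1 := by
  have hpos : (0 : ℝ) < (n.choose d : ℝ) * 2 ^ (n - d) :=
    mul_pos (by exact_mod_cast Nat.choose_pos hd) (by positivity)
  rw [gFrac, div_le_one hpos]
  calc (goodCount d H n S : ℝ) ≤ ((n.choose d * 2 ^ (n - d) : ℕ) : ℝ) := by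
        exact_mod_cast goodCount_le H S
    _ = (n.choose d : ℝ) * 2 ^ (n - d) := by push_cast; ring

theorem bddAbove_gFrac {n d : ℕ} (hd : d ≤ n) (H : Set (Fin d → Bool)) :
    BddAbove (Set.range fun S : Set (Fin n → Bool) => gFrac d H n S) :=
  ⟨1, by rintro x ⟨S, rfl⟩; exact gFrac_le_one hd H S⟩

theorem exD_nonneg {n d : ℕ} (hd : d ≤ n) (H : Set (Fin d → Bool)) : 0 ≤ exD d H n :=
  le_trans (gFrac_nonneg H ∅) (le_ciSup (bddAbove_gFrac hd H) ∅)

theorem exD_succ_le {n d : ℕ} (hd : d ≤ n) (H : Set (Fin d → Bool)) :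
    exD d H (n + 1) ≤ exD d H n := by
  have hbdd := bddAbove_gFrac hd H
  rw [exD]
  apply ciSup_le
  intro S
  have hDn : (0 : ℝ) < (n.choose d : ℝ) * 2 ^ (n - d) :=
    mul_pos (by exact_mod_cast Nat.choose_pos hd) (by positivity)
  have hDn1 : (0 : ℝ) < ((n + 1).choose d : ℝ) * 2 ^ (n + 1 - d) :=
    mul_pos (by exact_mod_cast Nat.choose_pos (hd.trans (Nat.le_succ n))) (by positivity)
  have hpow : (2 : ℝ) ^ (n + 1 - d) = 2 * 2 ^ (n - d) := by
    rw [show n + 1 - d = (n - d) + 1 by omega, pow_succ]; ring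
  have hch : ((n + 1 - d : ℕ) : ℝ) * (((n + 1).choose d : ℝ)) = ((n : ℝ) + 1) * (n.choose d : ℝ) := by
    have h0 := Nat.choose_mul_succ_eq n d
    have h2 : ((n.choose d * (n + 1) : ℕ) : ℝ) = (((n + 1).choose d * (n + 1 - d) : ℕ) : ℝ) :=
      congrArg (fun x : ℕ => (x : ℝ)) h0
    push_cast at h2
    push_cast
    linear_combination -h2
  have hsum : (∑ ib : Fin (n + 1) × Bool, gFrac d H n (slice ib.1 ib.2 S))
      = gFrac d H (n + 1) S * (2 * ((n : ℝ) + 1)) := by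
    have h1 : (∑ ib : Fin (n + 1) × Bool, gFrac d H n (slice ib.1 ib.2 S))
        = ((∑ ib : Fin (n + 1) × Bool, (goodCount d H n (slice ib.1 ib.2 S) : ℝ)))
          / ((n.choose d : ℝ) * 2 ^ (n - d)) := by
      rw [Finset.sum_div]; rfl
    rw [h1, ← Nat.cast_sum, slice_sum H S, gFrac, Nat.cast_mul, hpow]
    have hC0 : ((n.choose d : ℕ) : ℝ) ≠ 0 := by
      exact_mod_cast (Nat.choose_pos hd).ne'
    have hC1 : (((n + 1).choose d : ℕ) : ℝ) ≠ 0 := by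
      exact_mod_cast (Nat.choose_pos (hd.trans (Nat.le_succ n))).ne'
    have hP : (2 : ℝ) ^ (n - d) ≠ 0 := by positivity
    field_simp
    linear_combination (goodCount d H (n + 1) S : ℝ) * hch
  have hle : (∑ ib : Fin (n + 1) × Bool, gFrac d H n (slice ib.1 ib.2 S))
      ≤ (2 * ((n : ℝ) + 1)) * exD d H n := by
    calc (∑ ib : Fin (n + 1) × Bool, gFrac d H n (slice ib.1 ib.2 S))
        ≤ ∑ _ib : Fin (n + 1) × Bool, exD d H n :=
          Finset.sum_le_sum (fun ib _ => le_ciSup hbdd (slice ib.1 ib.2 S))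
      _ = (Fintype.card (Fin (n + 1) × Bool) : ℝ) * exD d H n := by
          rw [Finset.sum_const, Finset.card_univ, nsmul_eq_mul]
      _ = (2 * ((n : ℝ) + 1)) * exD d H n := by
          rw [Fintype.card_prod, Fintype.card_fin, Fintype.card_bool]
          push_cast
          ring
  have hpos : (0 : ℝ) < 2 * ((n : ℝ) + 1) := by positivity
  have h2 : gFrac d H (n + 1) S * (2 * ((n : ℝ) + 1)) ≤ (2 * ((n : ℝ) + 1)) * exD d H n :=
    hsum ▸ hle
  nlinarith [h2, hpos]

theorem gFrac_ge_49 (m : ℕ) (hm : 1 ≤ m) :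
    4 / 9 ≤ gFrac 3 W9 (3 * m) (Sc (3 * m)) := by
  have hpos : (0 : ℝ) < ((3 * m).choose 3 : ℝ) * 2 ^ (3 * m - 3) :=
    mul_pos (by exact_mod_cast Nat.choose_pos (by omega : 3 ≤ 3 * m)) (by positivity)
  rw [gFrac, div_le_div_iff₀ (by norm_num) hpos]
  have hnat : 4 * ((3 * m).choose 3 * 2 ^ (3 * m - 3))
      ≤ 9 * goodCount 3 W9 (3 * m) (Sc (3 * m)) := by
    have h1 := goodCount_ge (3 * m)
    have h2 := card_goodF m
    have h3 := choose_ineq m hm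
    calc 4 * ((3 * m).choose 3 * 2 ^ (3 * m - 3))
        = (4 * (3 * m).choose 3) * 2 ^ (3 * m - 3) := by ring
      _ ≤ (9 * (m * (2 * m).choose 2)) * 2 ^ (3 * m - 3) := Nat.mul_le_mul_right _ h3
      _ = 9 * ((m * (2 * m).choose 2) * 2 ^ (3 * m - 3)) := by ring
      _ ≤ 9 * ((Finset.univ.filter fun F : Finset (Fin (3 * m)) =>
            F.card = 3 ∧ (F.filter fun i => i.val % 3 = 1).card = 1).card * 2 ^ (3 * m - 3)) :=
          Nat.mul_le_mul_left _ (Nat.mul_le_mul_right _ h2)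
      _ ≤ 9 * goodCount 3 W9 (3 * m) (Sc (3 * m)) := Nat.mul_le_mul_left _ h1
  calc (4 : ℝ) * (((3 * m).choose 3 : ℝ) * 2 ^ (3 * m - 3))
      = ((4 * ((3 * m).choose 3 * 2 ^ (3 * m - 3)) : ℕ) : ℝ) := by push_cast; ring
    _ ≤ ((9 * goodCount 3 W9 (3 * m) (Sc (3 * m)) : ℕ) : ℝ) := by exact_mod_cast hnat
    _ = (goodCount 3 W9 (3 * m) (Sc (3 * m)) : ℝ) * 9 := by push_cast; ring

theorem exD_ge_49 (m : ℕ) (hm : 1 ≤ m) : 4 / 9 ≤ exD 3 W9 (3 * m) :=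
  le_trans (gFrac_ge_49 m hm) (le_ciSup (bddAbove_gFrac (by omega) W9) (Sc (3 * m)))

end CubeDensity

/-- λ(W₉, 3) ≥ 4/9, where W₉ = {(0,0,1),(1,0,0),(0,1,0),(1,1,0)} in Q₃. -/
theorem dCubeDensity_W9_ge :
    ∃ L : ℝ,
      Filter.Tendsto
        (fun n => CubeDensity.exD 3
          ({![false, false, true], ![true, false, false],
            ![false, true, false], ![true, true, false]} : Set (Fin 3 → Bool)) n)
        Filter.atTop (nhds L) ∧ 4 / 9 ≤ L := by
  show ∃ L : ℝ, Filter.Tendsto (fun n => CubeDensity.exD 3 CubeDensity.W9 n)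
      Filter.atTop (nhds L) ∧ 4 / 9 ≤ L
  have hanti : Antitone (fun k => CubeDensity.exD 3 CubeDensity.W9 (k + 3)) :=
    antitone_nat_of_succ_le (fun k => CubeDensity.exD_succ_le (by omega) CubeDensity.W9)
  have hbdd : BddBelow (Set.range fun k => CubeDensity.exD 3 CubeDensity.W9 (k + 3)) :=
    ⟨0, by rintro x ⟨k, rfl⟩; exact CubeDensity.exD_nonneg (by omega) CubeDensity.W9⟩
  have hconv := tendsto_atTop_ciInf hanti hbdd
  set L := ⨅ k, CubeDensity.exD 3 CubeDensity.W9 (k + 3) with hL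
  have hf : Filter.Tendsto (fun n => CubeDensity.exD 3 CubeDensity.W9 n)
      Filter.atTop (nhds L) := (Filter.tendsto_add_atTop_iff_nat 3).mp hconv
  refine ⟨L, hf, ?_⟩
  have hsub : Filter.Tendsto (fun m => CubeDensity.exD 3 CubeDensity.W9 (3 * (m + 1)))
      Filter.atTop (nhds L) :=
    hf.comp (tendsto_atTop_mono (fun m => by omega : ∀ m : ℕ, m ≤ 3 * (m + 1)) tendsto_id)
  exact ge_of_tendsto hsub
    (Filter.Eventually.of_forall fun m => CubeDensity.exD_ge_49 (m + 1) (by omega))
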